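/- arXiv:2510.17267 — 2 statements merged into one kernel-verified Lean document; each statement's English description precedes it below -/
import Mathlib

section
/- Let $j \geq 1$ be an integer and let $(c_h)_{h \geq 0}$ be a sequence of nonnegative real numbers such that the Cesàro limit $L = \lim_{M \to \infty} \frac{1}{M}\sum_{h=0}^{M-1} c_h$ exists. Then $\limsup_{N\to\infty} \frac{1}{N^2} \sum_{m=0}^{N-1} \sum_{n=0}^{N-1} c_{m + jn} \leq L$. -/
open Finset Filter

/-- The two-dimensional average of `c (m + j n)` over the square `[0,N-1]²` is
controlled by the one-dimensional Cesàro average of `c`. -/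
theorem limsup_two_dim_avg_le_cesaro (j : ℕ) (hj : 1 ≤ j) (c : ℕ → ℝ)
    (hc : ∀ h, 0 ≤ c h) (L : ℝ)
    (hL : Tendsto (fun M : ℕ => (1 / (M : ℝ)) * ∑ h ∈ Finset.range M, c h) atTop (nhds L)) :
    Filter.limsup
      (fun N : ℕ => (1 / (N : ℝ) ^ 2) *
        ∑ m ∈ Finset.range N, ∑ n ∈ Finset.range N, c (m + j * n)) atTop ≤ L := by
  set S : ℕ → ℝ := fun M => ∑ h ∈ Finset.range M, c h with hSdef
  set u : ℕ → ℝ := fun N => (1 / (N : ℝ) ^ 2) *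
        ∑ m ∈ Finset.range N, ∑ n ∈ Finset.range N, c (m + j * n) with hudef
  have hu0 : ∀ N, 0 ≤ u N := by
    intro N
    apply mul_nonneg (by positivity)
    exact Finset.sum_nonneg fun m _ => Finset.sum_nonneg fun n _ => hc _
  -- rewrite inner sums
  have hrow : ∀ N n : ℕ, ∑ m ∈ Finset.range N, c (m + j * n) = S (j * n + N) - S (j * n) := by
    intro N n
    rw [hSdef]
    simp only
    rw [← Finset.sum_Ico_eq_sub _ (Nat.le_add_right _ _), Finset.sum_Ico_eq_sum_range]
    simp only [Nat.add_sub_cancel_left]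
    exact Finset.sum_congr rfl fun m _ => by rw [Nat.add_comm]
  refine le_of_forall_pos_le_add ?_
  intro ε hε
  set δ : ℝ := ε / (2 * (j : ℝ) + 2) with hδdef
  have hjpos : (0:ℝ) < (j:ℝ) := by exact_mod_cast hj
  have hδpos : 0 < δ := by positivity
  -- partial-sum estimate
  obtain ⟨M₀, hM₀⟩ := Metric.tendsto_atTop.mp hL δ hδpos
  set C : ℝ := ∑ k ∈ Finset.range (M₀ + 1), |S k - L * k| with hCdef
  have hC0 : 0 ≤ C := Finset.sum_nonneg fun k _ => abs_nonneg _
  have hkey : ∀ M : ℕ, |S M - L * M| ≤ δ * M + C := by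
    intro M
    rcases lt_or_ge M (M₀ + 1) with h | h
    · have : |S M - L * M| ≤ C :=
        Finset.single_le_sum (f := fun k => |S k - L * (k:ℕ)|) (fun k _ => abs_nonneg _)
          (Finset.mem_range.mpr h)
      have : |S M - L * M| ≤ C := this
      nlinarith [Nat.cast_nonneg (α := ℝ) M]
    · have hM1 : 1 ≤ M := le_trans (Nat.le_add_left 1 M₀) h
      have hMpos : (0:ℝ) < M := by exact_mod_cast hM1
      have := hM₀ M (le_trans (Nat.le_succ M₀) h)
      rw [Real.dist_eq] at this
      have h2 : |S M - L * M| = (M : ℝ) * |1 / (M:ℝ) * S M - L| := by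
        rw [← abs_of_pos hMpos, ← abs_mul]
        congr 1
        field_simp
        rw [abs_of_pos hMpos]; ring
      rw [h2]
      have : (M:ℝ) * |1 / (M:ℝ) * S M - L| ≤ (M:ℝ) * δ := by
        exact mul_le_mul_of_nonneg_left this.le hMpos.le
      nlinarith
  -- eventual bound on u
  have hev : ∀ᶠ N in atTop, u N ≤ L + ε := by
    have h2C : Tendsto (fun N : ℕ => 2 * C / N) atTop (nhds 0) := by
      simpa using (tendsto_const_nhds (x := 2 * C)).div_atTop tendsto_natCast_atTop_atTop
    have h2C' : ∀ᶠ N : ℕ in atTop, 2 * C / N ≤ δ :=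
      (h2C.eventually (eventually_le_nhds hδpos))
    filter_upwards [h2C', eventually_ge_atTop 1] with N hCN hN1
    have hNpos : (0:ℝ) < N := by exact_mod_cast hN1
    have hbound : ∑ m ∈ Finset.range N, ∑ n ∈ Finset.range N, c (m + j * n)
        ≤ (L * N + δ * (2 * j + 1) * N + 2 * C) * N := by
      rw [Finset.sum_comm]
      have : ∀ n ∈ Finset.range N, ∑ m ∈ Finset.range N, c (m + j * n)
          ≤ L * N + δ * (2 * j + 1) * N + 2 * C := by
        intro n hn
        rw [hrow]
        have h1 := hkey (j * n + N)
        have h2 := hkey (j * n)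
        have hnN : (n : ℝ) ≤ (N : ℝ) - 1 := by
          have : n + 1 ≤ N := Finset.mem_range.mp hn
          have := (Nat.cast_le (α := ℝ)).mpr this
          push_cast at this
          linarith
        have hcast1 : ((j * n + N : ℕ) : ℝ) = (j:ℝ) * n + N := by push_cast; ring
        have hcast2 : ((j * n : ℕ) : ℝ) = (j:ℝ) * n := by push_cast; ring
        rw [hcast1] at h1
        rw [hcast2] at h2
        have ha1 := abs_le.mp h1
        have ha2 := abs_le.mp h2
        nlinarith [mul_le_mul_of_nonneg_left hnN hjpos.le, hδpos.le]
      calc ∑ n ∈ Finset.range N, ∑ m ∈ Finset.range N, c (m + j * n)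
          ≤ ∑ n ∈ Finset.range N, (L * N + δ * (2 * j + 1) * N + 2 * C) :=
            Finset.sum_le_sum this
        _ = (L * N + δ * (2 * j + 1) * N + 2 * C) * N := by
            rw [Finset.sum_const, Finset.card_range]; ring
    have : u N ≤ (1 / (N:ℝ)^2) * ((L * N + δ * (2 * j + 1) * N + 2 * C) * N) := by
      rw [hudef]
      exact mul_le_mul_of_nonneg_left hbound (by positivity)
    have heq : (1 / (N:ℝ)^2) * ((L * N + δ * (2 * j + 1) * N + 2 * C) * N)
        = L + δ * (2 * j + 1) + 2 * C / N := by
      field_simp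
    rw [heq] at this
    have hδε : δ * (2 * j + 1) + δ ≤ ε := by
      have : ε / (2 * (j:ℝ) + 2) * (2 * j + 1) + ε / (2 * (j:ℝ) + 2) = ε := by
        field_simp
        ring
      rw [hδdef]
      linarith
    linarith
  exact limsup_le_of_le (isCoboundedUnder_le_of_le atTop hu0) hev
end

section
/- Let $V$ be a complex inner product space (or $L^2$ of a probability space), let $k \geq 2$, and for $v \in \{0,1\}^k \setminus \{0\}$ let $a^{(v)} : \mathbb{Z}^2 \to [-1,1]$ be real sequences bounded by 1. Then $\left| \frac{1}{N^{2k}} \sum_{l, h \in [0,N-1]^k} \prod_{v \in \{0,1\}^k\setminus\{0\}} a^{(v)}_{l \cdot v,\, h \cdot v} \right|^2 \leq \frac{4}{N^{2k-4}} \sum_{h_1,\dots,h_{k-2},\, l_1,\dots,l_{k-2}=0}^{N-1} \sup_{t,s \in \mathbb{R}} \left| \frac{1}{N^2}\sum_{l_k, h_k = 0}^{N-1} e^{2\pi i (l_k t + h_k s)} \prod_{\substack{v : v_{k-1}=0,\, v_k = 1}} a^{(v)}_{l_k + \sum_{i=1}^{k-2} v_i l_i,\; h_k + \sum_{i=1}^{k-2}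 v_i h_i} \right|^2 -/
open Finset Complex

noncomputable def eC (M x j : ℕ) : ℂ := Complex.exp (2 * Real.pi * Complex.I * (x * j) / M)

lemma conj_eC (M x j : ℕ) : (starRingEnd ℂ) (eC M x j) = Complex.exp (-(2 * Real.pi * Complex.I * (x * j) / M)) := by
  rw [eC, ← Complex.exp_conj]
  congr 1
  simp only [map_div₀, map_mul, Complex.conj_I, map_ofNat, Complex.conj_natCast,
    Complex.conj_ofReal]
  ring

lemma conj_eC_mul_self (M x j : ℕ) : (starRingEnd ℂ) (eC M x j) * eC M x j = 1 := by
  rw [conj_eC, eC, ← Complex.exp_add, neg_add_cancel, Complex.exp_zero]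

lemma eC_norm (M x j : ℕ) : ‖eC M x j‖ = 1 := by
  have h := conj_eC_mul_self M x j
  have := congrArg norm h
  rw [norm_mul, Complex.norm_conj, norm_one] at this
  have h2 : ‖eC M x j‖ * ‖eC M x j‖ = 1 := this
  nlinarith [norm_nonneg (eC M x j)]

lemma eC_add_left (M x y j : ℕ) : eC M (x + y) j = eC M x j * eC M y j := by
  rw [eC, eC, eC, ← Complex.exp_add]
  congr 1
  push_cast
  ring

lemma eC_mod_left {M : ℕ} (hM : 0 < M) (x j : ℕ) : eC M (x % M) j = eC M x j := by
  conv_rhs => rw [← Nat.div_add_mod x M]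
  rw [eC_add_left]
  have : eC M (M * (x / M)) j = 1 := by
    rw [eC]
    have hM' : (M : ℂ) ≠ 0 := by exact_mod_cast hM.ne'
    have : 2 * (Real.pi : ℂ) * Complex.I * ((M * (x / M) : ℕ) * j) / M
        = ((x / M * j : ℕ) : ℂ) * (2 * Real.pi * Complex.I) := by
      push_cast
      field_simp
    rw [this, Complex.exp_nat_mul_two_pi_mul_I]
  rw [this, one_mul]

lemma orth1 {M : ℕ} (hM : 0 < M) {p p' : ℕ} (hp : p < M) (hp' : p' < M) :
    ∑ j ∈ range M, (starRingEnd ℂ) (eC M p j) * eC M p' j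
      = if p = p' then (M : ℂ) else 0 := by
  by_cases h : p = p'
  · subst h
    simp [conj_eC_mul_self]
  · rw [if_neg h]
    have hM' : (M : ℂ) ≠ 0 := by exact_mod_cast hM.ne'
    set z : ℂ := Complex.exp (2 * Real.pi * Complex.I * ((p' : ℂ) - p) / M) with hz
    have hterm : ∀ j ∈ range M, (starRingEnd ℂ) (eC M p j) * eC M p' j = z ^ j := by
      intro j _
      rw [conj_eC, eC, ← Complex.exp_add, hz, ← Complex.exp_nat_mul]
      congr 1
      push_cast
      field_simp
      ring
    rw [Finset.sum_congr rfl hterm]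
    have hz1 : z ≠ 1 := by
      intro hz1
      rw [hz, Complex.exp_eq_one_iff] at hz1
      obtain ⟨n, hn⟩ := hz1
      have h2 : (2 * Real.pi * Complex.I) ≠ 0 := by
        simp [Real.pi_ne_zero, Complex.I_ne_zero]
      have : ((p' : ℂ) - p) = n * M := by
        field_simp at hn
        have key : (2 * (Real.pi:ℂ) * Complex.I) * ((p' : ℂ) - p)
            = (2 * (Real.pi:ℂ) * Complex.I) * ((n : ℂ) * M) := by linear_combination (2 * (Real.pi:ℂ) * Complex.I) * hn
        exact mul_left_cancel₀ h2 key
      have hint : (p' : ℤ) - p = n * M := by exact_mod_cast this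
      have hn0 : n = 0 := by
        rcases lt_trichotomy n 0 with h'|h'|h' <;> [nlinarith [hint]; exact h'; nlinarith [hint]]
      rw [hn0] at hint
      omega
    have hzM : z ^ M = 1 := by
      rw [hz, ← Complex.exp_nat_mul]
      have : (M : ℂ) * (2 * Real.pi * Complex.I * ((p' : ℂ) - p) / M)
          = ((((p' : ℤ) - (p : ℤ)) : ℤ) : ℂ) * (2 * Real.pi * Complex.I) := by
        push_cast
        field_simp
      rw [this, Complex.exp_int_mul_two_pi_mul_I]
    rw [geom_sum_eq hz1, hzM]
    simp

lemma shift1 {M : ℕ} (hM : 0 < M) (g : ℕ → ℂ) (b j : ℕ) :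
    ∑ p ∈ range M, g ((p + b) % M) * (starRingEnd ℂ) (eC M p j)
      = eC M b j * ∑ p ∈ range M, g p * (starRingEnd ℂ) (eC M p j) := by
  obtain ⟨q, r, hqr, hr⟩ : ∃ q r, M * q + r = b ∧ r < M :=
    ⟨b / M, b % M, Nat.div_add_mod b M, Nat.mod_lt b hM⟩
  rw [Finset.mul_sum]
  refine Finset.sum_nbij' (fun p => (p + b) % M) (fun p => (p + (M - r)) % M) ?_ ?_ ?_ ?_ ?_
  · intro p hp; exact Finset.mem_range.2 (Nat.mod_lt _ hM)
  · intro p hp; exact Finset.mem_range.2 (Nat.mod_lt _ hM)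
  · intro p hp
    rw [Finset.mem_range] at hp
    show ((p + b) % M + (M - r)) % M = p
    rw [Nat.mod_add_mod]
    have e1 : M * (q + 1) = M * q + M := by ring
    have h1 : p + b + (M - r) = p + M * (q + 1) := by omega
    rw [h1, Nat.add_mul_mod_self_left, Nat.mod_eq_of_lt hp]
  · intro p hp
    rw [Finset.mem_range] at hp
    show ((p + (M - r)) % M + b) % M = p
    rw [Nat.mod_add_mod]
    have e1 : M * (q + 1) = M * q + M := by ring
    have h1 : p + (M - r) + b = p + M * (q + 1) := by omega
    rw [h1, Nat.add_mul_mod_self_left, Nat.mod_eq_of_lt hp]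
  · intro p hp
    rw [Finset.mem_range] at hp
    have hc : (starRingEnd ℂ) (eC M p j)
        = eC M b j * (starRingEnd ℂ) (eC M ((p + b) % M) j) := by
      rw [eC_mod_left hM, eC_add_left, map_mul,
        show eC M b j * ((starRingEnd ℂ) (eC M p j) * (starRingEnd ℂ) (eC M b j))
          = ((starRingEnd ℂ) (eC M b j) * eC M b j) * (starRingEnd ℂ) (eC M p j) from by ring,
        conj_eC_mul_self, one_mul]
    show g ((p + b) % M) * (starRingEnd ℂ) (eC M p j)
        = eC M b j * (g ((p + b) % M) * (starRingEnd ℂ) (eC M ((p + b) % M) j))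
    rw [hc]
    ring

lemma parseval1 {M : ℕ} (hM : 0 < M) (f : ℕ → ℂ) :
    ∑ j ∈ range M, ‖∑ p ∈ range M, f p * (starRingEnd ℂ) (eC M p j)‖ ^ 2
      = M * ∑ p ∈ range M, ‖f p‖ ^ 2 := by
  have key : ∑ j ∈ range M,
      ((∑ p ∈ range M, f p * (starRingEnd ℂ) (eC M p j)) *
        (starRingEnd ℂ) (∑ p ∈ range M, f p * (starRingEnd ℂ) (eC M p j)))
      = (M : ℂ) * ∑ p ∈ range M, f p * (starRingEnd ℂ) (f p) := by
    have expand : ∀ j : ℕ,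
        ((∑ p ∈ range M, f p * (starRingEnd ℂ) (eC M p j)) *
          (starRingEnd ℂ) (∑ p ∈ range M, f p * (starRingEnd ℂ) (eC M p j)))
        = ∑ p ∈ range M, ∑ p' ∈ range M,
            f p * (starRingEnd ℂ) (f p') * ((starRingEnd ℂ) (eC M p j) * eC M p' j) := by
      intro j
      rw [map_sum, Finset.sum_mul_sum]
      refine Finset.sum_congr rfl fun p _ => Finset.sum_congr rfl fun p' _ => ?_
      rw [map_mul, Complex.conj_conj]
      ring
    calc ∑ j ∈ range M, ((∑ p ∈ range M, f p * (starRingEnd ℂ) (eC M p j)) *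
          (starRingEnd ℂ) (∑ p ∈ range M, f p * (starRingEnd ℂ) (eC M p j)))
        = ∑ j ∈ range M, ∑ p ∈ range M, ∑ p' ∈ range M,
            f p * (starRingEnd ℂ) (f p') * ((starRingEnd ℂ) (eC M p j) * eC M p' j) := by
          exact Finset.sum_congr rfl fun j _ => expand j
      _ = ∑ p ∈ range M, ∑ p' ∈ range M,
            f p * (starRingEnd ℂ) (f p') * ∑ j ∈ range M, (starRingEnd ℂ) (eC M p j) * eC M p' j := by
          rw [Finset.sum_comm]
          refine Finset.sum_congr rfl fun p _ => ?_
          rw [Finset.sum_comm]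
          refine Finset.sum_congr rfl fun p' _ => ?_
          rw [Finset.mul_sum]
      _ = ∑ p ∈ range M, ∑ p' ∈ range M,
            f p * (starRingEnd ℂ) (f p') * (if p = p' then (M:ℂ) else 0) := by
          refine Finset.sum_congr rfl fun p hp => Finset.sum_congr rfl fun p' hp' => ?_
          rw [orth1 hM (Finset.mem_range.1 hp) (Finset.mem_range.1 hp')]
      _ = (M : ℂ) * ∑ p ∈ range M, f p * (starRingEnd ℂ) (f p) := by
          rw [Finset.mul_sum]
          refine Finset.sum_congr rfl fun p hp => ?_
          rw [Finset.sum_eq_single p]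
          · rw [if_pos rfl]; ring
          · intro p' _ hne; rw [if_neg (fun h => hne h.symm), mul_zero]
          · intro h; exact absurd hp h
  have cast1 : ∀ z : ℂ, z * (starRingEnd ℂ) z = ((‖z‖ ^ 2 : ℝ) : ℂ) := by
    intro z
    rw [Complex.mul_conj]
    norm_cast
    rw [Complex.normSq_eq_norm_sq, Complex.sq_norm, Complex.normSq_eq_norm_sq]
  simp only [cast1] at key
  exact_mod_cast key

lemma parseval2 {M : ℕ} (hM : 0 < M) (f : ℕ → ℕ → ℂ) :
    ∑ j ∈ range M, ∑ j' ∈ range M,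
      ‖∑ p ∈ range M, ∑ q ∈ range M,
          f p q * ((starRingEnd ℂ) (eC M p j) * (starRingEnd ℂ) (eC M q j'))‖ ^ 2
      = (M : ℝ) ^ 2 * ∑ p ∈ range M, ∑ q ∈ range M, ‖f p q‖ ^ 2 := by
  have step1 : ∀ j j' : ℕ,
      (∑ p ∈ range M, ∑ q ∈ range M,
          f p q * ((starRingEnd ℂ) (eC M p j) * (starRingEnd ℂ) (eC M q j')))
      = ∑ q ∈ range M, (∑ p ∈ range M, f p q * (starRingEnd ℂ) (eC M p j)) *
          (starRingEnd ℂ) (eC M q j') := by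
    intro j j'
    rw [Finset.sum_comm]
    refine Finset.sum_congr rfl fun q _ => ?_
    rw [Finset.sum_mul]
    refine Finset.sum_congr rfl fun p _ => by ring
  calc ∑ j ∈ range M, ∑ j' ∈ range M,
      ‖∑ p ∈ range M, ∑ q ∈ range M,
          f p q * ((starRingEnd ℂ) (eC M p j) * (starRingEnd ℂ) (eC M q j'))‖ ^ 2
      = ∑ j ∈ range M, (M : ℝ) * ∑ q ∈ range M,
          ‖∑ p ∈ range M, f p q * (starRingEnd ℂ) (eC M p j)‖ ^ 2 := by
        refine Finset.sum_congr rfl fun j _ => ?_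
        rw [← parseval1 hM (fun q => ∑ p ∈ range M, f p q * (starRingEnd ℂ) (eC M p j))]
        exact Finset.sum_congr rfl fun j' _ => by rw [step1 j j']
    _ = (M : ℝ) * ∑ q ∈ range M, ∑ j ∈ range M,
          ‖∑ p ∈ range M, f p q * (starRingEnd ℂ) (eC M p j)‖ ^ 2 := by
        rw [← Finset.mul_sum, Finset.sum_comm]
    _ = (M : ℝ) * ∑ q ∈ range M, (M : ℝ) * ∑ p ∈ range M, ‖f p q‖ ^ 2 := by
        rw [mul_right_inj' (by exact_mod_cast hM.ne' : (M:ℝ) ≠ 0)]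
        exact Finset.sum_congr rfl fun q _ => parseval1 hM (fun p => f p q)
    _ = (M : ℝ) ^ 2 * ∑ p ∈ range M, ∑ q ∈ range M, ‖f p q‖ ^ 2 := by
        rw [← Finset.mul_sum, Finset.sum_comm]
        ring

lemma sum_swap4 {α : Type*} [AddCommMonoid α] (s t u v : Finset ℕ) (f : ℕ → ℕ → ℕ → ℕ → α) :
    ∑ p ∈ s, ∑ q ∈ t, ∑ b ∈ u, ∑ d ∈ v, f p q b d
      = ∑ b ∈ u, ∑ d ∈ v, ∑ p ∈ s, ∑ q ∈ t, f p q b d := by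
  calc ∑ p ∈ s, ∑ q ∈ t, ∑ b ∈ u, ∑ d ∈ v, f p q b d
      = ∑ p ∈ s, ∑ b ∈ u, ∑ q ∈ t, ∑ d ∈ v, f p q b d :=
        Finset.sum_congr rfl fun p _ => Finset.sum_comm
    _ = ∑ b ∈ u, ∑ p ∈ s, ∑ q ∈ t, ∑ d ∈ v, f p q b d := Finset.sum_comm
    _ = ∑ b ∈ u, ∑ p ∈ s, ∑ d ∈ v, ∑ q ∈ t, f p q b d :=
        Finset.sum_congr rfl fun b _ => Finset.sum_congr rfl fun p _ => Finset.sum_comm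
    _ = ∑ b ∈ u, ∑ d ∈ v, ∑ p ∈ s, ∑ q ∈ t, f p q b d :=
        Finset.sum_congr rfl fun b _ => Finset.sum_comm

lemma keyK (N : ℕ) (hN : 0 < N) (F G : ℕ → ℕ → ℝ) (hG : ∀ x y, |G x y| ≤ 1) (B : ℝ)
    (hB : ∀ j j' : ℕ, ‖∑ b ∈ range N, ∑ d ∈ range N,
        (F b d : ℂ) * (eC (2*N) b j * eC (2*N) d j')‖ ^ 2 ≤ B) :
    ∑ x ∈ range N, ∑ y ∈ range N,
      (∑ b ∈ range N, ∑ d ∈ range N, F b d * G (x + b) (y + d)) ^ 2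
      ≤ 4 * (N : ℝ) ^ 2 * B := by
  set M := 2 * N with hMdef
  have hM : 0 < M := by omega
  set Gc : ℕ → ℕ → ℂ := fun x y => if x < M ∧ y < M then (G x y : ℂ) else 0 with hGc
  set C : ℕ → ℕ → ℂ := fun p q => ∑ b ∈ range N, ∑ d ∈ range N,
      (F b d : ℂ) * Gc ((p + b) % M) ((q + d) % M) with hCdef
  -- Step 1 : on the small square, C is the real correlation
  have step1 : ∀ x ∈ range N, ∀ y ∈ range N,
      (∑ b ∈ range N, ∑ d ∈ range N, F b d * G (x + b) (y + d)) ^ 2 = ‖C x y‖ ^ 2 := by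
    intro x hx y hy
    rw [Finset.mem_range] at hx hy
    have : C x y = ((∑ b ∈ range N, ∑ d ∈ range N, F b d * G (x + b) (y + d) : ℝ) : ℂ) := by
      rw [hCdef]
      push_cast
      refine Finset.sum_congr rfl fun b hb => Finset.sum_congr rfl fun d hd => ?_
      rw [Finset.mem_range] at hb hd
      have h1 : (x + b) % M = x + b := Nat.mod_eq_of_lt (by omega)
      have h2 : (y + d) % M = y + d := Nat.mod_eq_of_lt (by omega)
      rw [h1, h2, hGc]
      simp only []
      rw [if_pos ⟨by omega, by omega⟩]
    rw [this, Complex.norm_real, Real.norm_eq_abs, _root_.sq_abs]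
  -- Step 2 : extend to the big square
  have step2 : ∑ x ∈ range N, ∑ y ∈ range N, ‖C x y‖ ^ 2
      ≤ ∑ p ∈ range M, ∑ q ∈ range M, ‖C p q‖ ^ 2 := by
    have hsub : range N ⊆ range M := Finset.range_subset_range.2 (by omega)
    refine le_trans (Finset.sum_le_sum fun x _ => ?_)
      (Finset.sum_le_sum_of_subset_of_nonneg hsub fun _ _ _ => by positivity)
    exact Finset.sum_le_sum_of_subset_of_nonneg hsub fun _ _ _ => by positivity
  -- Step 3 : factorization of the Fourier transform of C
  have factor : ∀ j j' : ℕ,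
      ∑ p ∈ range M, ∑ q ∈ range M,
          C p q * ((starRingEnd ℂ) (eC M p j) * (starRingEnd ℂ) (eC M q j'))
      = (∑ b ∈ range N, ∑ d ∈ range N, (F b d : ℂ) * (eC M b j * eC M d j'))
        * (∑ p ∈ range M, ∑ q ∈ range M,
            Gc p q * ((starRingEnd ℂ) (eC M p j) * (starRingEnd ℂ) (eC M q j'))) := by
    intro j j'
    calc ∑ p ∈ range M, ∑ q ∈ range M,
          C p q * ((starRingEnd ℂ) (eC M p j) * (starRingEnd ℂ) (eC M q j'))
        = ∑ p ∈ range M, ∑ q ∈ range M, ∑ b ∈ range N, ∑ d ∈ range N,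
            (F b d : ℂ) * Gc ((p + b) % M) ((q + d) % M)
              * ((starRingEnd ℂ) (eC M p j) * (starRingEnd ℂ) (eC M q j')) := by
          refine Finset.sum_congr rfl fun p _ => Finset.sum_congr rfl fun q _ => ?_
          rw [hCdef]
          simp only []
          rw [Finset.sum_mul]
          exact Finset.sum_congr rfl fun b _ => by rw [Finset.sum_mul]
      _ = ∑ b ∈ range N, ∑ d ∈ range N, ∑ p ∈ range M, ∑ q ∈ range M,
            (F b d : ℂ) * Gc ((p + b) % M) ((q + d) % M)
              * ((starRingEnd ℂ) (eC M p j) * (starRingEnd ℂ) (eC M q j')) :=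
          sum_swap4 _ _ _ _ _
      _ = ∑ b ∈ range N, ∑ d ∈ range N, (F b d : ℂ) * (eC M b j * eC M d j')
            * ∑ p ∈ range M, ∑ q ∈ range M,
                Gc p q * ((starRingEnd ℂ) (eC M p j) * (starRingEnd ℂ) (eC M q j')) := by
          refine Finset.sum_congr rfl fun b _ => Finset.sum_congr rfl fun d _ => ?_
          calc ∑ p ∈ range M, ∑ q ∈ range M,
              (F b d : ℂ) * Gc ((p + b) % M) ((q + d) % M)
                * ((starRingEnd ℂ) (eC M p j) * (starRingEnd ℂ) (eC M q j'))
              = (F b d : ℂ) * ∑ p ∈ range M,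
                  (∑ q ∈ range M, Gc ((p + b) % M) ((q + d) % M) * (starRingEnd ℂ) (eC M q j'))
                    * (starRingEnd ℂ) (eC M p j) := by
                rw [Finset.mul_sum]
                refine Finset.sum_congr rfl fun p _ => ?_
                rw [Finset.sum_mul, Finset.mul_sum]
                exact Finset.sum_congr rfl fun q _ => by ring
            _ = (F b d : ℂ) * ∑ p ∈ range M,
                  (eC M d j' * ∑ q ∈ range M, Gc ((p + b) % M) q * (starRingEnd ℂ) (eC M q j'))
                    * (starRingEnd ℂ) (eC M p j) := by
                congr 1
                refine Finset.sum_congr rfl fun p _ => ?_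
                rw [shift1 hM (fun y => Gc ((p + b) % M) y) d j']
            _ = (F b d : ℂ) * (eC M d j' * ∑ p ∈ range M,
                  (∑ q ∈ range M, Gc ((p + b) % M) q * (starRingEnd ℂ) (eC M q j'))
                    * (starRingEnd ℂ) (eC M p j)) := by
                congr 1
                rw [Finset.mul_sum]
                exact Finset.sum_congr rfl fun p _ => by ring
            _ = (F b d : ℂ) * (eC M d j' * (eC M b j * ∑ p ∈ range M,
                  (∑ q ∈ range M, Gc p q * (starRingEnd ℂ) (eC M q j'))
                    * (starRingEnd ℂ) (eC M p j))) := by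
                rw [shift1 hM (fun x => ∑ q ∈ range M, Gc x q * (starRingEnd ℂ) (eC M q j')) b j]
            _ = (F b d : ℂ) * (eC M b j * eC M d j')
                  * ∑ p ∈ range M, ∑ q ∈ range M,
                      Gc p q * ((starRingEnd ℂ) (eC M p j) * (starRingEnd ℂ) (eC M q j')) := by
                rw [show ∑ p ∈ range M, ∑ q ∈ range M,
                      Gc p q * ((starRingEnd ℂ) (eC M p j) * (starRingEnd ℂ) (eC M q j'))
                    = ∑ p ∈ range M, (∑ q ∈ range M,
                        Gc p q * (starRingEnd ℂ) (eC M q j')) * (starRingEnd ℂ) (eC M p j) from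
                  Finset.sum_congr rfl fun p _ => by
                    rw [Finset.sum_mul]; exact Finset.sum_congr rfl fun q _ => by ring]
                ring
      _ = (∑ b ∈ range N, ∑ d ∈ range N, (F b d : ℂ) * (eC M b j * eC M d j'))
            * (∑ p ∈ range M, ∑ q ∈ range M,
                Gc p q * ((starRingEnd ℂ) (eC M p j) * (starRingEnd ℂ) (eC M q j'))) := by
          rw [Finset.sum_mul]
          exact Finset.sum_congr rfl fun b _ => by rw [Finset.sum_mul]
  -- Step 4 : Parseval for C and for Gc
  have parsC := parseval2 hM C
  have parsG := parseval2 hM Gc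
  have hGc1 : ∀ p q : ℕ, ‖Gc p q‖ ≤ 1 := by
    intro p q
    rw [hGc]
    simp only []
    split
    · rw [Complex.norm_real]; exact hG _ _
    · simp
  have hB0 : 0 ≤ B := le_trans (by positivity) (hB 0 0)
  -- Step 5 : assemble
  have hsumG : ∑ p ∈ range M, ∑ q ∈ range M, ‖Gc p q‖ ^ 2 ≤ (M : ℝ) ^ 2 := by
    calc ∑ p ∈ range M, ∑ q ∈ range M, ‖Gc p q‖ ^ 2
        ≤ ∑ p ∈ range M, ∑ q ∈ range M, (1 : ℝ) := by
          refine Finset.sum_le_sum fun p _ => Finset.sum_le_sum fun q _ => ?_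
          have := hGc1 p q
          nlinarith [norm_nonneg (Gc p q)]
      _ = (M : ℝ) ^ 2 := by simp [sq]
  have hhat : ∑ j ∈ range M, ∑ j' ∈ range M,
      ‖∑ p ∈ range M, ∑ q ∈ range M,
          C p q * ((starRingEnd ℂ) (eC M p j) * (starRingEnd ℂ) (eC M q j'))‖ ^ 2
      ≤ B * ((M : ℝ) ^ 2 * ∑ p ∈ range M, ∑ q ∈ range M, ‖Gc p q‖ ^ 2) := by
    rw [← parsG, Finset.mul_sum]
    refine Finset.sum_le_sum fun j _ => ?_
    rw [Finset.mul_sum]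
    refine Finset.sum_le_sum fun j' _ => ?_
    rw [factor j j', norm_mul, mul_pow]
    exact mul_le_mul_of_nonneg_right (hB j j') (by positivity)
  have main : (M : ℝ) ^ 2 * (∑ p ∈ range M, ∑ q ∈ range M, ‖C p q‖ ^ 2)
      ≤ B * ((M : ℝ) ^ 2 * (M : ℝ) ^ 2) := by
    rw [← parsC]
    refine le_trans hhat ?_
    exact mul_le_mul_of_nonneg_left (mul_le_mul_of_nonneg_left hsumG (by positivity)) hB0
  have hMpos : (0 : ℝ) < (M : ℝ) ^ 2 := by positivity
  have main2 : ∑ p ∈ range M, ∑ q ∈ range M, ‖C p q‖ ^ 2 ≤ B * (M : ℝ) ^ 2 := by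
    have := (mul_le_mul_iff_of_pos_left hMpos).1 (by
      calc (M : ℝ) ^ 2 * (∑ p ∈ range M, ∑ q ∈ range M, ‖C p q‖ ^ 2)
          ≤ B * ((M : ℝ) ^ 2 * (M : ℝ) ^ 2) := main
        _ = (M : ℝ) ^ 2 * (B * (M : ℝ) ^ 2) := by ring)
    exact this
  calc ∑ x ∈ range N, ∑ y ∈ range N,
      (∑ b ∈ range N, ∑ d ∈ range N, F b d * G (x + b) (y + d)) ^ 2
      = ∑ x ∈ range N, ∑ y ∈ range N, ‖C x y‖ ^ 2 :=
        Finset.sum_congr rfl fun x hx => Finset.sum_congr rfl fun y hy => step1 x hx y hy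
    _ ≤ B * (M : ℝ) ^ 2 := le_trans step2 main2
    _ = 4 * (N : ℝ) ^ 2 * B := by
        rw [hMdef]
        push_cast
        ring

def extFun (m : ℕ) (l' : Fin m → ℕ) (x y : ℕ) : Fin (m + 2) → ℕ := fun i =>
  if h : (i : ℕ) < m then l' ⟨i, h⟩ else if (i : ℕ) = m then x else y

lemma extFun_castLE (m : ℕ) (l' : Fin m → ℕ) (x y : ℕ) (i : Fin m) :
    extFun m l' x y (Fin.castLE (by omega) i) = l' i := by
  rw [extFun]
  have h : ((Fin.castLE (by omega : m ≤ m + 2) i : Fin (m+2)) : ℕ) < m := i.isLt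
  rw [dif_pos h]
  exact congrArg l' (Fin.ext rfl)

lemma extFun_i0 (m : ℕ) (l' : Fin m → ℕ) (x y : ℕ) :
    extFun m l' x y ⟨m, by omega⟩ = x := by
  rw [extFun]
  rw [dif_neg (show ¬ (m < m) by omega), if_pos rfl]

lemma extFun_i1 (m : ℕ) (l' : Fin m → ℕ) (x y : ℕ) :
    extFun m l' x y ⟨m + 1, by omega⟩ = y := by
  rw [extFun]
  rw [dif_neg (show ¬ (m + 1 < m) by omega), if_neg (show ¬ (m + 1 = m) by omega)]

lemma extFun_eta (m : ℕ) (l : Fin (m + 2) → ℕ) :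
    extFun m (fun i => l (Fin.castLE (by omega) i)) (l ⟨m, by omega⟩) (l ⟨m + 1, by omega⟩) = l := by
  funext i
  rw [extFun]
  by_cases h : (i : ℕ) < m
  · rw [dif_pos h]
    exact congrArg l (Fin.ext rfl)
  · rw [dif_neg h]
    by_cases h2 : (i : ℕ) = m
    · rw [if_pos h2]
      exact congrArg l (Fin.ext h2.symm)
    · rw [if_neg h2]
      refine congrArg l (Fin.ext ?_)
      have := i.isLt
      simp only []
      omega

lemma sum_piFinset_split {α : Type*} [AddCommMonoid α] (m N : ℕ)
    (f : (Fin (m + 2) → ℕ) → α) :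
    ∑ l ∈ Fintype.piFinset (fun _ : Fin (m + 2) => Finset.range N), f l
      = ∑ l' ∈ Fintype.piFinset (fun _ : Fin m => Finset.range N),
          ∑ x ∈ Finset.range N, ∑ y ∈ Finset.range N, f (extFun m l' x y) := by
  calc ∑ l ∈ Fintype.piFinset (fun _ : Fin (m + 2) => Finset.range N), f l
      = ∑ z ∈ (Fintype.piFinset (fun _ : Fin m => Finset.range N))
            ×ˢ (Finset.range N ×ˢ Finset.range N), f (extFun m z.1 z.2.1 z.2.2) := by
        refine Finset.sum_nbij'
          (fun l => (fun i => l (Fin.castLE (by omega) i), (l ⟨m, by omega⟩, l ⟨m + 1, by omega⟩)))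
          (fun z => extFun m z.1 z.2.1 z.2.2) ?_ ?_ ?_ ?_ ?_
        · intro l hl
          rw [Fintype.mem_piFinset] at hl
          refine Finset.mem_product.2 ⟨?_, Finset.mem_product.2 ⟨hl _, hl _⟩⟩
          rw [Fintype.mem_piFinset]
          intro i
          exact hl _
        · intro z hz
          rw [Finset.mem_product] at hz
          obtain ⟨h1, h2⟩ := hz
          rw [Finset.mem_product] at h2
          rw [Fintype.mem_piFinset] at h1 ⊢
          intro i
          simp only [extFun]
          split
          · exact h1 _
          · split
            · exact h2.1
            · exact h2.2
        · intro l _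
          exact extFun_eta m l
        · rintro ⟨z1, z2, z3⟩ _
          simp only [Prod.mk.injEq]
          exact ⟨funext fun i => extFun_castLE m z1 z2 z3 i,
            extFun_i0 m z1 z2 z3, extFun_i1 m z1 z2 z3⟩
        · intro l _
          exact (congrArg f (extFun_eta m l)).symm
    _ = ∑ l' ∈ Fintype.piFinset (fun _ : Fin m => Finset.range N),
          ∑ p ∈ Finset.range N ×ˢ Finset.range N, f (extFun m l' p.1 p.2) :=
        Finset.sum_product _ _ _
    _ = ∑ l' ∈ Fintype.piFinset (fun _ : Fin m => Finset.range N),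
          ∑ x ∈ Finset.range N, ∑ y ∈ Finset.range N, f (extFun m l' x y) :=
        Finset.sum_congr rfl fun l' _ => Finset.sum_product _ _ _

lemma dot_split (m : ℕ) (v : Fin (m + 2) → Bool) (l' : Fin m → ℕ) (x y : ℕ) :
    (∑ i : Fin (m + 2), if v i then extFun m l' x y i else 0)
      = ((if v ⟨m, by omega⟩ then x else 0) + (if v ⟨m + 1, by omega⟩ then y else 0))
        + ∑ i : Fin m, (if v (Fin.castLE (by omega) i) then l' i else 0) := by
  rw [Fin.sum_univ_castSucc, Fin.sum_univ_castSucc]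
  have h1 : (Fin.last (m + 1) : Fin (m + 2)) = ⟨m + 1, by omega⟩ := rfl
  have h2 : ((Fin.last m).castSucc : Fin (m + 2)) = ⟨m, by omega⟩ := rfl
  have h3 : ∀ i : Fin m, (i.castSucc.castSucc : Fin (m + 2)) = Fin.castLE (by omega) i :=
    fun i => Fin.ext rfl
  rw [h1, h2]
  rw [extFun_i0, extFun_i1]
  have h4 : ∀ i : Fin m,
      (if v i.castSucc.castSucc then extFun m l' x y i.castSucc.castSucc else 0)
        = (if v (Fin.castLE (by omega) i) then l' i else 0) := by
    intro i
    rw [h3 i, extFun_castLE]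
  rw [Finset.sum_congr rfl (fun i _ => h4 i)]
  ring

@[reducible] def dlN (m : ℕ) (l' : Fin m → ℕ) (v : Fin (m + 2) → Bool) : ℕ :=
  ∑ i : Fin m, if v (Fin.castLE (by omega) i) then l' i else 0

@[reducible] def Ffun (m : ℕ) (a : (Fin (m + 2) → Bool) → ℕ → ℕ → ℝ)
    (l' h' : Fin m → ℕ) (b d : ℕ) : ℝ :=
  ∏ v ∈ Finset.univ.filter
      (fun v : Fin (m + 2) → Bool => v ⟨m, by omega⟩ = false ∧ v ⟨m + 1, by omega⟩ = true),
    a v (b + dlN m l' v) (d + dlN m h' v)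

@[reducible] def Gfun (m : ℕ) (a : (Fin (m + 2) → Bool) → ℕ → ℕ → ℝ)
    (l' h' : Fin m → ℕ) (u w : ℕ) : ℝ :=
  ∏ v ∈ Finset.univ.filter
      (fun v : Fin (m + 2) → Bool => v ⟨m, by omega⟩ = true ∧ v ⟨m + 1, by omega⟩ = true),
    a v (u + dlN m l' v) (w + dlN m h' v)

@[reducible] def Afun (m : ℕ) (a : (Fin (m + 2) → Bool) → ℕ → ℕ → ℝ)
    (l' h' : Fin m → ℕ) (x z : ℕ) : ℝ :=
  ∏ v ∈ Finset.univ.filter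
      (fun v : Fin (m + 2) → Bool => (v ≠ fun _ => false) ∧ v ⟨m + 1, by omega⟩ = false),
    a v ((if v ⟨m, by omega⟩ then x else 0) + dlN m l' v)
        ((if v ⟨m, by omega⟩ then z else 0) + dlN m h' v)

lemma abs_prod_le_one {ι : Type*} (s : Finset ι) (f : ι → ℝ) (hf : ∀ i ∈ s, |f i| ≤ 1) :
    |∏ i ∈ s, f i| ≤ 1 := by
  rw [Finset.abs_prod]
  exact Finset.prod_le_one (fun i _ => abs_nonneg _) (fun i hi => hf i hi)

lemma prod_split_pred {ι γ : Type*} [Fintype ι] [CommMonoid γ] (p q : ι → Prop)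
    [DecidablePred p] [DecidablePred q] (f : ι → γ) :
    ∏ v ∈ Finset.univ.filter p, f v
      = (∏ v ∈ Finset.univ.filter (fun v => p v ∧ q v), f v) *
        ∏ v ∈ Finset.univ.filter (fun v => p v ∧ ¬ q v), f v := by
  rw [← Finset.prod_filter_mul_prod_filter_not (Finset.univ.filter p) q f,
    Finset.filter_filter, Finset.filter_filter]

lemma prodsplit (m : ℕ) (a : (Fin (m + 2) → Bool) → ℕ → ℕ → ℝ)
    (l' h' : Fin m → ℕ) (x y z w : ℕ) :
    (∏ v ∈ Finset.univ.filter (fun v : Fin (m + 2) → Bool => v ≠ fun _ => false),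
        a v (∑ i, if v i then extFun m l' x y i else 0)
            (∑ i, if v i then extFun m h' z w i else 0))
      = Afun m a l' h' x z * (Ffun m a l' h' y w * Gfun m a l' h' (x + y) (z + w)) := by
  have harg : ∀ v : Fin (m + 2) → Bool,
      a v (∑ i, if v i then extFun m l' x y i else 0)
          (∑ i, if v i then extFun m h' z w i else 0)
      = a v (((if v ⟨m, by omega⟩ then x else 0) + (if v ⟨m + 1, by omega⟩ then y else 0))
              + dlN m l' v)
            (((if v ⟨m, by omega⟩ then z else 0) + (if v ⟨m + 1, by omega⟩ then w else 0))
              + dlN m h' v) := by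
    intro v
    rw [dot_split, dot_split]
  rw [Finset.prod_congr rfl (fun v _ => harg v)]
  rw [prod_split_pred (fun v : Fin (m + 2) → Bool => v ≠ fun _ => false)
    (fun v => v ⟨m + 1, by omega⟩ = true)]
  rw [prod_split_pred (fun v : Fin (m + 2) → Bool =>
      (v ≠ fun _ => false) ∧ v ⟨m + 1, by omega⟩ = true)
    (fun v => v ⟨m, by omega⟩ = true)]
  have hsetG : Finset.univ.filter
      (fun v : Fin (m + 2) → Bool => ((v ≠ fun _ => false) ∧ v ⟨m + 1, by omega⟩ = true)
        ∧ v ⟨m, by omega⟩ = true)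
      = Finset.univ.filter
        (fun v : Fin (m + 2) → Bool => v ⟨m, by omega⟩ = true ∧ v ⟨m + 1, by omega⟩ = true) := by
    refine Finset.filter_congr fun v _ => ?_
    constructor
    · rintro ⟨⟨-, h1⟩, h0⟩; exact ⟨h0, h1⟩
    · rintro ⟨h0, h1⟩
      refine ⟨⟨fun h0' => ?_, h1⟩, h0⟩
      rw [h0'] at h1
      simp at h1
  have hsetF : Finset.univ.filter
      (fun v : Fin (m + 2) → Bool => ((v ≠ fun _ => false) ∧ v ⟨m + 1, by omega⟩ = true)
        ∧ ¬ v ⟨m, by omega⟩ = true)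
      = Finset.univ.filter
        (fun v : Fin (m + 2) → Bool => v ⟨m, by omega⟩ = false ∧ v ⟨m + 1, by omega⟩ = true) := by
    refine Finset.filter_congr fun v _ => ?_
    constructor
    · rintro ⟨⟨-, h1⟩, h0⟩; exact ⟨by simpa using h0, h1⟩
    · rintro ⟨h0, h1⟩
      refine ⟨⟨fun h0' => ?_, h1⟩, by simp [h0]⟩
      rw [h0'] at h1
      simp at h1
  have hsetA : Finset.univ.filter
      (fun v : Fin (m + 2) → Bool => (v ≠ fun _ => false) ∧ ¬ v ⟨m + 1, by omega⟩ = true)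
      = Finset.univ.filter
        (fun v : Fin (m + 2) → Bool => (v ≠ fun _ => false) ∧ v ⟨m + 1, by omega⟩ = false) := by
    refine Finset.filter_congr fun v _ => ?_
    simp [Bool.not_eq_true]
  rw [hsetG, hsetF, hsetA]
  have hG : ∏ v ∈ Finset.univ.filter
      (fun v : Fin (m + 2) → Bool => v ⟨m, by omega⟩ = true ∧ v ⟨m + 1, by omega⟩ = true),
      a v (((if v ⟨m, by omega⟩ then x else 0) + (if v ⟨m + 1, by omega⟩ then y else 0))
            + dlN m l' v)
          (((if v ⟨m, by omega⟩ then z else 0) + (if v ⟨m + 1, by omega⟩ then w else 0))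
            + dlN m h' v)
      = Gfun m a l' h' (x + y) (z + w) := by
    refine Finset.prod_congr rfl fun v hv => ?_
    rw [Finset.mem_filter] at hv
    obtain ⟨-, h0, h1⟩ := hv
    rw [h0, h1]
    simp
  have hF : ∏ v ∈ Finset.univ.filter
      (fun v : Fin (m + 2) → Bool => v ⟨m, by omega⟩ = false ∧ v ⟨m + 1, by omega⟩ = true),
      a v (((if v ⟨m, by omega⟩ then x else 0) + (if v ⟨m + 1, by omega⟩ then y else 0))
            + dlN m l' v)
          (((if v ⟨m, by omega⟩ then z else 0) + (if v ⟨m + 1, by omega⟩ then w else 0))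
            + dlN m h' v)
      = Ffun m a l' h' y w := by
    refine Finset.prod_congr rfl fun v hv => ?_
    rw [Finset.mem_filter] at hv
    obtain ⟨-, h0, h1⟩ := hv
    rw [h0, h1]
    simp
  have hA : ∏ v ∈ Finset.univ.filter
      (fun v : Fin (m + 2) → Bool => (v ≠ fun _ => false) ∧ v ⟨m + 1, by omega⟩ = false),
      a v (((if v ⟨m, by omega⟩ then x else 0) + (if v ⟨m + 1, by omega⟩ then y else 0))
            + dlN m l' v)
          (((if v ⟨m, by omega⟩ then z else 0) + (if v ⟨m + 1, by omega⟩ then w else 0))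
            + dlN m h' v)
      = Afun m a l' h' x z := by
    refine Finset.prod_congr rfl fun v hv => ?_
    rw [Finset.mem_filter] at hv
    obtain ⟨-, -, h1⟩ := hv
    rw [h1]
    simp
  rw [hG, hF, hA]
  ring

lemma sum_reorder6 {ι κ γ : Type*} [AddCommMonoid γ] (S : Finset ι) (T : Finset κ)
    (R : Finset ℕ) (f : ι → ℕ → ℕ → κ → ℕ → ℕ → γ) :
    ∑ l' ∈ S, ∑ x ∈ R, ∑ y ∈ R, ∑ h' ∈ T, ∑ z ∈ R, ∑ w ∈ R, f l' x y h' z w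
      = ∑ l' ∈ S, ∑ h' ∈ T, ∑ x ∈ R, ∑ z ∈ R, ∑ y ∈ R, ∑ w ∈ R, f l' x y h' z w := by
  refine Finset.sum_congr rfl fun l' _ => ?_
  calc ∑ x ∈ R, ∑ y ∈ R, ∑ h' ∈ T, ∑ z ∈ R, ∑ w ∈ R, f l' x y h' z w
      = ∑ x ∈ R, ∑ h' ∈ T, ∑ y ∈ R, ∑ z ∈ R, ∑ w ∈ R, f l' x y h' z w :=
        Finset.sum_congr rfl fun x _ => Finset.sum_comm
    _ = ∑ h' ∈ T, ∑ x ∈ R, ∑ y ∈ R, ∑ z ∈ R, ∑ w ∈ R, f l' x y h' z w := Finset.sum_comm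
    _ = ∑ h' ∈ T, ∑ x ∈ R, ∑ z ∈ R, ∑ y ∈ R, ∑ w ∈ R, f l' x y h' z w :=
        Finset.sum_congr rfl fun h' _ => Finset.sum_congr rfl fun x _ => Finset.sum_comm

@[reducible] def Tfun (m N : ℕ) (a : (Fin (m + 2) → Bool) → ℕ → ℕ → ℝ)
    (l' h' : Fin m → ℕ) (x z : ℕ) : ℝ :=
  ∑ y ∈ Finset.range N, ∑ w ∈ Finset.range N,
    Ffun m a l' h' y w * Gfun m a l' h' (x + y) (z + w)

noncomputable def SupF (m N : ℕ) (a : (Fin (m + 2) → Bool) → ℕ → ℕ → ℝ)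
    (l' h' : Fin m → ℕ) : ℝ :=
  ⨆ t : ℝ, ⨆ s : ℝ,
    ‖(1 / (N : ℂ) ^ 2) *
      ∑ lk ∈ Finset.range N, ∑ hk ∈ Finset.range N,
        Complex.exp (2 * Real.pi * Complex.I * ((lk : ℂ) * (t : ℂ) + (hk : ℂ) * (s : ℂ))) *
          ((Ffun m a l' h' lk hk : ℝ) : ℂ)‖ ^ 2

lemma quad_sq_bound {ι κ : Type*} (S : Finset ι) (T : Finset κ) (R : Finset ℕ)
    (g : ι → κ → ℕ → ℕ → ℝ) :
    (∑ i ∈ S, ∑ j ∈ T, ∑ x ∈ R, ∑ z ∈ R, g i j x z) ^ 2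
      ≤ (S.card : ℝ) * T.card * R.card * R.card *
          ∑ i ∈ S, ∑ j ∈ T, ∑ x ∈ R, ∑ z ∈ R, (g i j x z) ^ 2 := by
  calc (∑ i ∈ S, ∑ j ∈ T, ∑ x ∈ R, ∑ z ∈ R, g i j x z) ^ 2
      ≤ (S.card : ℝ) * ∑ i ∈ S, (∑ j ∈ T, ∑ x ∈ R, ∑ z ∈ R, g i j x z) ^ 2 :=
        sq_sum_le_card_mul_sum_sq
    _ ≤ (S.card : ℝ) * ∑ i ∈ S, ((T.card : ℝ) * ∑ j ∈ T, (∑ x ∈ R, ∑ z ∈ R, g i j x z) ^ 2) :=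
        mul_le_mul_of_nonneg_left
          (Finset.sum_le_sum fun i _ => sq_sum_le_card_mul_sum_sq) (Nat.cast_nonneg _)
    _ ≤ (S.card : ℝ) * ∑ i ∈ S, ((T.card : ℝ) * ∑ j ∈ T,
          ((R.card : ℝ) * ∑ x ∈ R, (∑ z ∈ R, g i j x z) ^ 2)) :=
        mul_le_mul_of_nonneg_left (Finset.sum_le_sum fun i _ =>
          mul_le_mul_of_nonneg_left (Finset.sum_le_sum fun j _ => sq_sum_le_card_mul_sum_sq)
            (Nat.cast_nonneg _)) (Nat.cast_nonneg _)
    _ ≤ (S.card : ℝ) * ∑ i ∈ S, ((T.card : ℝ) * ∑ j ∈ T,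
          ((R.card : ℝ) * ∑ x ∈ R, ((R.card : ℝ) * ∑ z ∈ R, (g i j x z) ^ 2))) :=
        mul_le_mul_of_nonneg_left (Finset.sum_le_sum fun i _ =>
          mul_le_mul_of_nonneg_left (Finset.sum_le_sum fun j _ =>
            mul_le_mul_of_nonneg_left (Finset.sum_le_sum fun x _ => sq_sum_le_card_mul_sum_sq)
              (Nat.cast_nonneg _)) (Nat.cast_nonneg _)) (Nat.cast_nonneg _)
    _ = (S.card : ℝ) * T.card * R.card * R.card *
          ∑ i ∈ S, ∑ j ∈ T, ∑ x ∈ R, ∑ z ∈ R, (g i j x z) ^ 2 := by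
        simp only [Finset.mul_sum]
        refine Finset.sum_congr rfl fun i _ => Finset.sum_congr rfl fun j _ =>
          Finset.sum_congr rfl fun x _ => Finset.sum_congr rfl fun z _ => by ring

lemma main_est (m N : ℕ) (hN : 1 ≤ N) (a : (Fin (m + 2) → Bool) → ℕ → ℕ → ℝ)
    (ha : ∀ v b d, |a v b d| ≤ 1) :
    |(1 / (N : ℝ) ^ (2 * (m + 2))) *
        ∑ l ∈ Fintype.piFinset (fun _ : Fin (m + 2) => Finset.range N),
          ∑ h ∈ Fintype.piFinset (fun _ : Fin (m + 2) => Finset.range N),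
            ∏ v ∈ Finset.univ.filter (fun v : Fin (m + 2) → Bool => v ≠ fun _ => false),
              a v (∑ i, if v i then l i else 0) (∑ i, if v i then h i else 0)| ^ 2
      ≤ (4 / (N : ℝ) ^ (2 * m)) *
          ∑ l' ∈ Fintype.piFinset (fun _ : Fin m => Finset.range N),
            ∑ h' ∈ Fintype.piFinset (fun _ : Fin m => Finset.range N),
              SupF m N a l' h' := by
  have hN0 : 0 < N := hN
  have hNR : (0 : ℝ) < N := by exact_mod_cast hN0
  set Λ := Fintype.piFinset (fun _ : Fin m => Finset.range N) with hΛdef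
  set Sig0 : ℝ := ∑ l ∈ Fintype.piFinset (fun _ : Fin (m + 2) => Finset.range N),
      ∑ h ∈ Fintype.piFinset (fun _ : Fin (m + 2) => Finset.range N),
        ∏ v ∈ Finset.univ.filter (fun v : Fin (m + 2) → Bool => v ≠ fun _ => false),
          a v (∑ i, if v i then l i else 0) (∑ i, if v i then h i else 0) with hSig0
  -- Step 1 : splitting of the sums
  have hsplit : Sig0 = ∑ l' ∈ Λ, ∑ h' ∈ Λ, ∑ x ∈ Finset.range N, ∑ z ∈ Finset.range N,
      Afun m a l' h' x z * Tfun m N a l' h' x z := by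
    rw [hSig0, hΛdef]
    calc ∑ l ∈ Fintype.piFinset (fun _ : Fin (m + 2) => Finset.range N),
        ∑ h ∈ Fintype.piFinset (fun _ : Fin (m + 2) => Finset.range N),
          ∏ v ∈ Finset.univ.filter (fun v : Fin (m + 2) → Bool => v ≠ fun _ => false),
            a v (∑ i, if v i then l i else 0) (∑ i, if v i then h i else 0)
        = ∑ l' ∈ Fintype.piFinset (fun _ : Fin m => Finset.range N),
            ∑ x ∈ Finset.range N, ∑ y ∈ Finset.range N,
              ∑ h ∈ Fintype.piFinset (fun _ : Fin (m + 2) => Finset.range N),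
                ∏ v ∈ Finset.univ.filter (fun v : Fin (m + 2) → Bool => v ≠ fun _ => false),
                  a v (∑ i, if v i then extFun m l' x y i else 0)
                      (∑ i, if v i then h i else 0) :=
          sum_piFinset_split m N _
      _ = ∑ l' ∈ Fintype.piFinset (fun _ : Fin m => Finset.range N),
            ∑ x ∈ Finset.range N, ∑ y ∈ Finset.range N,
              ∑ h' ∈ Fintype.piFinset (fun _ : Fin m => Finset.range N),
                ∑ z ∈ Finset.range N, ∑ w ∈ Finset.range N,
                  ∏ v ∈ Finset.univ.filter (fun v : Fin (m + 2) → Bool => v ≠ fun _ => false),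
                    a v (∑ i, if v i then extFun m l' x y i else 0)
                        (∑ i, if v i then extFun m h' z w i else 0) :=
          Finset.sum_congr rfl fun l' _ => Finset.sum_congr rfl fun x _ =>
            Finset.sum_congr rfl fun y _ => sum_piFinset_split m N _
      _ = ∑ l' ∈ Fintype.piFinset (fun _ : Fin m => Finset.range N),
            ∑ x ∈ Finset.range N, ∑ y ∈ Finset.range N,
              ∑ h' ∈ Fintype.piFinset (fun _ : Fin m => Finset.range N),
                ∑ z ∈ Finset.range N, ∑ w ∈ Finset.range N,
                  Afun m a l' h' x z * (Ffun m a l' h' y w * Gfun m a l' h' (x + y) (z + w)) :=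
          Finset.sum_congr rfl fun l' _ => Finset.sum_congr rfl fun x _ =>
            Finset.sum_congr rfl fun y _ => Finset.sum_congr rfl fun h' _ =>
              Finset.sum_congr rfl fun z _ => Finset.sum_congr rfl fun w _ =>
                prodsplit m a l' h' x y z w
      _ = ∑ l' ∈ Fintype.piFinset (fun _ : Fin m => Finset.range N),
            ∑ h' ∈ Fintype.piFinset (fun _ : Fin m => Finset.range N),
              ∑ x ∈ Finset.range N, ∑ z ∈ Finset.range N,
                ∑ y ∈ Finset.range N, ∑ w ∈ Finset.range N,
                  Afun m a l' h' x z * (Ffun m a l' h' y w * Gfun m a l' h' (x + y) (z + w)) :=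
          sum_reorder6 _ _ _ _
      _ = ∑ l' ∈ Fintype.piFinset (fun _ : Fin m => Finset.range N),
            ∑ h' ∈ Fintype.piFinset (fun _ : Fin m => Finset.range N),
              ∑ x ∈ Finset.range N, ∑ z ∈ Finset.range N,
                Afun m a l' h' x z * Tfun m N a l' h' x z := by
          refine Finset.sum_congr rfl fun l' _ => Finset.sum_congr rfl fun h' _ =>
            Finset.sum_congr rfl fun x _ => Finset.sum_congr rfl fun z _ => ?_
          rw [Finset.mul_sum]
          exact Finset.sum_congr rfl fun y _ => by rw [Finset.mul_sum]
  -- Step 2 : triangle inequality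
  have tri : |Sig0| ≤ ∑ l' ∈ Λ, ∑ h' ∈ Λ, ∑ x ∈ Finset.range N, ∑ z ∈ Finset.range N,
      |Tfun m N a l' h' x z| := by
    rw [hsplit]
    refine le_trans (Finset.abs_sum_le_sum_abs _ _) (Finset.sum_le_sum fun l' _ => ?_)
    refine le_trans (Finset.abs_sum_le_sum_abs _ _) (Finset.sum_le_sum fun h' _ => ?_)
    refine le_trans (Finset.abs_sum_le_sum_abs _ _) (Finset.sum_le_sum fun x _ => ?_)
    refine le_trans (Finset.abs_sum_le_sum_abs _ _) (Finset.sum_le_sum fun z _ => ?_)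
    rw [abs_mul]
    exact mul_le_of_le_one_left (abs_nonneg _) (abs_prod_le_one _ _ fun v _ => ha _ _ _)
  -- Step 3 : Cauchy-Schwarz
  have hcard : (Λ.card : ℝ) = (N : ℝ) ^ m := by
    rw [hΛdef, Fintype.card_piFinset_const, Finset.card_range]
    push_cast
    ring
  have CS : (∑ l' ∈ Λ, ∑ h' ∈ Λ, ∑ x ∈ Finset.range N, ∑ z ∈ Finset.range N,
        |Tfun m N a l' h' x z|) ^ 2
      ≤ (N : ℝ) ^ (2 * m + 2) * ∑ l' ∈ Λ, ∑ h' ∈ Λ, ∑ x ∈ Finset.range N,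
          ∑ z ∈ Finset.range N, (Tfun m N a l' h' x z) ^ 2 := by
    refine le_trans (quad_sq_bound Λ Λ (Finset.range N) _) ?_
    rw [hcard, Finset.card_range]
    have habs : ∀ l' h' x z, |Tfun m N a l' h' x z| ^ 2 = (Tfun m N a l' h' x z) ^ 2 :=
      fun l' h' x z => sq_abs _
    rw [show (∑ l' ∈ Λ, ∑ h' ∈ Λ, ∑ x ∈ Finset.range N, ∑ z ∈ Finset.range N,
        |Tfun m N a l' h' x z| ^ 2)
      = ∑ l' ∈ Λ, ∑ h' ∈ Λ, ∑ x ∈ Finset.range N, ∑ z ∈ Finset.range N,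
          (Tfun m N a l' h' x z) ^ 2 from
      Finset.sum_congr rfl fun l' _ => Finset.sum_congr rfl fun h' _ =>
        Finset.sum_congr rfl fun x _ => Finset.sum_congr rfl fun z _ => habs l' h' x z]
    refine mul_le_mul_of_nonneg_right (le_of_eq ?_) ?_
    · rw [show 2 * m + 2 = (m + m) + (1 + 1) from by ring, pow_add, pow_add, pow_add, pow_one]
      push_cast
      ring
    · refine Finset.sum_nonneg fun l' _ => Finset.sum_nonneg fun h' _ =>
        Finset.sum_nonneg fun x _ => Finset.sum_nonneg fun z _ => sq_nonneg _
  -- Step 4 : the key correlation estimate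
  have hkey : ∀ l' ∈ Λ, ∀ h' ∈ Λ,
      ∑ x ∈ Finset.range N, ∑ z ∈ Finset.range N, (Tfun m N a l' h' x z) ^ 2
        ≤ 4 * (N : ℝ) ^ 2 * ((N : ℝ) ^ 4 * SupF m N a l' h') := by
    intro l' _ h' _
    have hb1 : ∀ t s : ℝ,
        ‖(1 / (N : ℂ) ^ 2) * ∑ lk ∈ Finset.range N, ∑ hk ∈ Finset.range N,
            Complex.exp (2 * Real.pi * Complex.I * ((lk : ℂ) * (t : ℂ) + (hk : ℂ) * (s : ℂ))) *
              ((Ffun m a l' h' lk hk : ℝ) : ℂ)‖ ^ 2 ≤ 1 := by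
      intro t s
      have hsum : ‖∑ lk ∈ Finset.range N, ∑ hk ∈ Finset.range N,
          Complex.exp (2 * Real.pi * Complex.I * ((lk : ℂ) * (t : ℂ) + (hk : ℂ) * (s : ℂ))) *
            ((Ffun m a l' h' lk hk : ℝ) : ℂ)‖ ≤ (N : ℝ) ^ 2 := by
        refine le_trans (norm_sum_le _ _) ?_
        have hinner : ∀ lk ∈ Finset.range N, ‖∑ hk ∈ Finset.range N,
            Complex.exp (2 * Real.pi * Complex.I * ((lk : ℂ) * (t : ℂ) + (hk : ℂ) * (s : ℂ))) *
              ((Ffun m a l' h' lk hk : ℝ) : ℂ)‖ ≤ (N : ℝ) := by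
          intro lk _
          refine le_trans (norm_sum_le _ _) ?_
          have h1 : ∀ hk ∈ Finset.range N,
              ‖Complex.exp (2 * Real.pi * Complex.I *
                  ((lk : ℂ) * (t : ℂ) + (hk : ℂ) * (s : ℂ))) *
                ((Ffun m a l' h' lk hk : ℝ) : ℂ)‖ ≤ 1 := by
            intro hk _
            rw [norm_mul]
            have he : ‖Complex.exp (2 * Real.pi * Complex.I *
                ((lk : ℂ) * (t : ℂ) + (hk : ℂ) * (s : ℂ)))‖ = 1 := by
              have harg : (2 * (Real.pi : ℂ) * Complex.I *
                  ((lk : ℂ) * (t : ℂ) + (hk : ℂ) * (s : ℂ)))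
                  = ((2 * Real.pi * (lk * t + hk * s) : ℝ) : ℂ) * Complex.I := by
                push_cast
                ring
              rw [harg, Complex.norm_exp_ofReal_mul_I]
            rw [he, one_mul, Complex.norm_real, Real.norm_eq_abs]
            exact abs_prod_le_one _ _ fun v _ => ha _ _ _
          calc ∑ hk ∈ Finset.range N, ‖Complex.exp (2 * Real.pi * Complex.I *
                  ((lk : ℂ) * (t : ℂ) + (hk : ℂ) * (s : ℂ))) *
                ((Ffun m a l' h' lk hk : ℝ) : ℂ)‖
              ≤ ∑ _hk ∈ Finset.range N, (1 : ℝ) := Finset.sum_le_sum h1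
            _ = (N : ℝ) := by simp
        calc ∑ lk ∈ Finset.range N, ‖∑ hk ∈ Finset.range N,
              Complex.exp (2 * Real.pi * Complex.I *
                  ((lk : ℂ) * (t : ℂ) + (hk : ℂ) * (s : ℂ))) *
                ((Ffun m a l' h' lk hk : ℝ) : ℂ)‖
            ≤ ∑ _lk ∈ Finset.range N, (N : ℝ) := Finset.sum_le_sum hinner
          _ = (N : ℝ) ^ 2 := by simp [sq]
      rw [norm_mul]
      have h1 : ‖(1 : ℂ) / (N : ℂ) ^ 2‖ = 1 / (N : ℝ) ^ 2 := by
        rw [norm_div, norm_one, norm_pow, Complex.norm_natCast]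
      rw [h1, mul_pow]
      calc (1 / (N : ℝ) ^ 2) ^ 2 * ‖∑ lk ∈ Finset.range N, ∑ hk ∈ Finset.range N,
            Complex.exp (2 * Real.pi * Complex.I *
                ((lk : ℂ) * (t : ℂ) + (hk : ℂ) * (s : ℂ))) *
              ((Ffun m a l' h' lk hk : ℝ) : ℂ)‖ ^ 2
          ≤ (1 / (N : ℝ) ^ 2) ^ 2 * ((N : ℝ) ^ 2) ^ 2 := by
            refine mul_le_mul_of_nonneg_left ?_ (by positivity)
            exact pow_le_pow_left₀ (norm_nonneg _) hsum 2
        _ = 1 := by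
            field_simp
    have hsup : ∀ t s : ℝ,
        ‖(1 / (N : ℂ) ^ 2) * ∑ lk ∈ Finset.range N, ∑ hk ∈ Finset.range N,
            Complex.exp (2 * Real.pi * Complex.I * ((lk : ℂ) * (t : ℂ) + (hk : ℂ) * (s : ℂ))) *
              ((Ffun m a l' h' lk hk : ℝ) : ℂ)‖ ^ 2 ≤ SupF m N a l' h' := by
      intro t s
      have step1 : ‖(1 / (N : ℂ) ^ 2) * ∑ lk ∈ Finset.range N, ∑ hk ∈ Finset.range N,
          Complex.exp (2 * Real.pi * Complex.I * ((lk : ℂ) * (t : ℂ) + (hk : ℂ) * (s : ℂ))) *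
            ((Ffun m a l' h' lk hk : ℝ) : ℂ)‖ ^ 2
          ≤ ⨆ s' : ℝ, ‖(1 / (N : ℂ) ^ 2) * ∑ lk ∈ Finset.range N, ∑ hk ∈ Finset.range N,
              Complex.exp (2 * Real.pi * Complex.I *
                  ((lk : ℂ) * (t : ℂ) + (hk : ℂ) * (s' : ℂ))) *
                ((Ffun m a l' h' lk hk : ℝ) : ℂ)‖ ^ 2 :=
        le_ciSup ⟨(1 : ℝ), fun r hr => by obtain ⟨s', rfl⟩ := hr; exact hb1 t s'⟩ s
      refine le_trans step1 ?_
      exact le_ciSup (f := fun t' : ℝ => ⨆ s' : ℝ,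
          ‖(1 / (N : ℂ) ^ 2) * ∑ lk ∈ Finset.range N, ∑ hk ∈ Finset.range N,
              Complex.exp (2 * Real.pi * Complex.I *
                  ((lk : ℂ) * (t' : ℂ) + (hk : ℂ) * (s' : ℂ))) *
                ((Ffun m a l' h' lk hk : ℝ) : ℂ)‖ ^ 2)
        ⟨(1 : ℝ), fun r hr => by
          obtain ⟨t', rfl⟩ := hr
          exact ciSup_le fun s' => hb1 t' s'⟩ t
    have hG : ∀ u w, |Gfun m a l' h' u w| ≤ 1 :=
      fun u w => abs_prod_le_one _ _ fun v _ => ha _ _ _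
    refine keyK N hN0 (Ffun m a l' h') (Gfun m a l' h') hG
      ((N : ℝ) ^ 4 * SupF m N a l' h') ?_
    intro j j'
    have h2N : (2 * (N : ℂ)) ≠ 0 := by
      simp only [ne_eq, mul_eq_zero, OfNat.ofNat_ne_zero, false_or, Nat.cast_eq_zero]
      omega
    have hterm : ∀ b d : ℕ, ((Ffun m a l' h' b d : ℝ) : ℂ) * (eC (2 * N) b j * eC (2 * N) d j')
        = Complex.exp (2 * Real.pi * Complex.I *
            ((b : ℂ) * (((j : ℝ) / (2 * N) : ℝ) : ℂ) + (d : ℂ) * (((j' : ℝ) / (2 * N) : ℝ) : ℂ)))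
          * ((Ffun m a l' h' b d : ℝ) : ℂ) := by
      intro b d
      rw [eC, eC, ← Complex.exp_add, mul_comm]
      congr 2
      push_cast
      field_simp
    rw [Finset.sum_congr rfl fun b _ => Finset.sum_congr rfl fun d _ => hterm b d]
    have hfold : ‖∑ b ∈ Finset.range N, ∑ d ∈ Finset.range N,
        Complex.exp (2 * Real.pi * Complex.I *
            ((b : ℂ) * (((j : ℝ) / (2 * N) : ℝ) : ℂ) + (d : ℂ) * (((j' : ℝ) / (2 * N) : ℝ) : ℂ)))
          * ((Ffun m a l' h' b d : ℝ) : ℂ)‖ ^ 2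
        = (N : ℝ) ^ 4 * ‖(1 / (N : ℂ) ^ 2) * ∑ b ∈ Finset.range N, ∑ d ∈ Finset.range N,
            Complex.exp (2 * Real.pi * Complex.I *
                ((b : ℂ) * (((j : ℝ) / (2 * N) : ℝ) : ℂ)
                  + (d : ℂ) * (((j' : ℝ) / (2 * N) : ℝ) : ℂ)))
              * ((Ffun m a l' h' b d : ℝ) : ℂ)‖ ^ 2 := by
      rw [norm_mul]
      have h1 : ‖(1 : ℂ) / (N : ℂ) ^ 2‖ = 1 / (N : ℝ) ^ 2 := by
        rw [norm_div, norm_one, norm_pow, Complex.norm_natCast]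
      rw [h1, mul_pow]
      have hNne : ((N : ℝ) ^ 2) ^ 2 ≠ 0 := by positivity
      field_simp
      congr 2
      refine Finset.sum_congr rfl fun b _ => Finset.sum_congr rfl fun d _ => ?_
      ring_nf
    rw [hfold]
    exact mul_le_mul_of_nonneg_left
      (hsup ((j : ℝ) / (2 * N)) ((j' : ℝ) / (2 * N))) (by positivity)
  -- Step 5 : assemble
  have hconst : ∑ l' ∈ Λ, ∑ h' ∈ Λ, 4 * (N : ℝ) ^ 2 * ((N : ℝ) ^ 4 * SupF m N a l' h')
      = 4 * (N : ℝ) ^ 6 * ∑ l' ∈ Λ, ∑ h' ∈ Λ, SupF m N a l' h' := by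
    rw [Finset.mul_sum]
    refine Finset.sum_congr rfl fun l' _ => ?_
    rw [Finset.mul_sum]
    exact Finset.sum_congr rfl fun h' _ => by ring
  calc |(1 / (N : ℝ) ^ (2 * (m + 2))) * Sig0| ^ 2
      = (1 / (N : ℝ) ^ (2 * (m + 2))) ^ 2 * |Sig0| ^ 2 := by
        rw [abs_mul, mul_pow,
          abs_of_pos (by positivity : (0 : ℝ) < 1 / (N : ℝ) ^ (2 * (m + 2)))]
    _ ≤ (1 / (N : ℝ) ^ (2 * (m + 2))) ^ 2 *
          ((∑ l' ∈ Λ, ∑ h' ∈ Λ, ∑ x ∈ Finset.range N, ∑ z ∈ Finset.range N,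
            |Tfun m N a l' h' x z|) ^ 2) :=
        mul_le_mul_of_nonneg_left (pow_le_pow_left₀ (abs_nonneg _) tri 2) (by positivity)
    _ ≤ (1 / (N : ℝ) ^ (2 * (m + 2))) ^ 2 *
          ((N : ℝ) ^ (2 * m + 2) * ∑ l' ∈ Λ, ∑ h' ∈ Λ, ∑ x ∈ Finset.range N,
            ∑ z ∈ Finset.range N, (Tfun m N a l' h' x z) ^ 2) :=
        mul_le_mul_of_nonneg_left CS (by positivity)
    _ ≤ (1 / (N : ℝ) ^ (2 * (m + 2))) ^ 2 *
          ((N : ℝ) ^ (2 * m + 2) * ∑ l' ∈ Λ, ∑ h' ∈ Λ,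
            4 * (N : ℝ) ^ 2 * ((N : ℝ) ^ 4 * SupF m N a l' h')) :=
        mul_le_mul_of_nonneg_left (mul_le_mul_of_nonneg_left
          (Finset.sum_le_sum fun l' hl' => Finset.sum_le_sum fun h' hh' => hkey l' hl' h' hh')
          (by positivity)) (by positivity)
    _ = (4 / (N : ℝ) ^ (2 * m)) * ∑ l' ∈ Λ, ∑ h' ∈ Λ, SupF m N a l' h' := by
        rw [hconst]
        have hne : (N : ℝ) ≠ 0 := hNR.ne'
        field_simp
        ring

/-- Lemma 3.1 of the paper: a `2k`-dimensional cubic average of bounded sequences is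
bounded by exponential-sum suprema after eliminating two indices. -/
theorem cubic_average_estimate (k : ℕ) (hk : 2 ≤ k) (N : ℕ) (hN : 1 ≤ N)
    (a : (Fin k → Bool) → ℕ → ℕ → ℝ)
    (ha : ∀ v m n, |a v m n| ≤ 1) :
    |(1 / (N : ℝ) ^ (2 * k)) *
        ∑ l ∈ Fintype.piFinset (fun _ : Fin k => Finset.range N),
          ∑ h ∈ Fintype.piFinset (fun _ : Fin k => Finset.range N),
            ∏ v ∈ Finset.univ.filter (fun v : Fin k → Bool => v ≠ fun _ => false),
              a v (∑ i, if v i then l i else 0) (∑ i, if v i then h i else 0)| ^ 2 ≤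
      (4 / (N : ℝ) ^ (2 * k - 4)) *
        ∑ l ∈ Fintype.piFinset (fun _ : Fin (k - 2) => Finset.range N),
          ∑ h ∈ Fintype.piFinset (fun _ : Fin (k - 2) => Finset.range N),
            ⨆ t : ℝ, ⨆ s : ℝ,
              ‖(1 / (N : ℂ) ^ 2) *
                ∑ lk ∈ Finset.range N, ∑ hk ∈ Finset.range N,
                  Complex.exp (2 * Real.pi * Complex.I * ((lk : ℂ) * (t : ℂ) + (hk : ℂ) * (s : ℂ))) *
                    ((∏ v ∈ Finset.univ.filter (fun v : Fin k → Bool =>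
                        v ⟨k - 2, by omega⟩ = false ∧ v ⟨k - 1, by omega⟩ = true),
                      a v (lk + ∑ i : Fin (k - 2), if v (Fin.castLE (by omega) i) then l i else 0)
                          (hk + ∑ i : Fin (k - 2), if v (Fin.castLE (by omega) i) then h i else 0) : ℝ) : ℂ)‖ ^ 2 := by
  obtain ⟨m, rfl⟩ : ∃ m, k = m + 2 := ⟨k - 2, by omega⟩
  exact main_est m N hN a ha
end
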